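/- (Superadditivity across elements used in Theorem 1's proof) For any subset X ⊆ E and any fixed permutation σ, Σ_{j=1}^K ω_j Σ_{e_i∈X} c_{σ(j)i} = Σ_{e_i∈X} Σ_{j=1}^K ω_j c_{σ(j)i} ≤ Σ_{e_i∈X} ĉ_i, where ĉ_i = wowa_{(v,p)}(c_{1i},…,c_{Ki}) and σ is the permutation sorting the totals F(X,c_j) nonincreasingly; i.e., the WOWA value of a sum of nonnegative vectors is at most the sum of their WOWA values: wowa_{(v,p)}(Σ_i a^i) ≤ Σ_i wowa_{(v,p)}(a^i) for nonnegative vectors a^i ∈ ℝ^K, when v is nonincreasing. -/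

import Mathlib

open Finset

/-- The piecewise linear function `w*` induced by the weight vector `v`:
`w*(0)=0`, `w*(j/K) = ∑_{i≤j} v i`, linear on each `[(j-1)/K, j/K]`. -/
noncomputable def wstar (K : ℕ) (v : Fin K → ℝ) (t : ℝ) : ℝ :=
  ∑ i : Fin K, v i * min 1 (max 0 (t * (K : ℝ) - (i.1 : ℝ)))

/-- The WOWA weight `ω_j = w*(∑_{i≤j} p_{σ(i)}) - w*(∑_{i<j} p_{σ(i)})`. -/
noncomputable def wowaWeight (K : ℕ) (v p : Fin K → ℝ) (σ : Equiv.Perm (Fin K))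
    (j : Fin K) : ℝ :=
  wstar K v (∑ i ∈ Finset.Iic j, p (σ i)) - wstar K v (∑ i ∈ Finset.Iio j, p (σ i))

/-- The WOWA aggregation of `a` relative to a permutation `σ`
(sorting `a` nonincreasingly gives the WOWA value). -/
noncomputable def wowaW (K : ℕ) (v p : Fin K → ℝ) (σ : Equiv.Perm (Fin K))
    (a : Fin K → ℝ) : ℝ :=
  ∑ j : Fin K, wowaWeight K v p σ j * a (σ j)

/-! ### Auxiliary material -/

/-- Extension of `v` to `ℕ` by zero. -/
noncomputable def vext (K : ℕ) (v : Fin K → ℝ) (n : ℕ) : ℝ :=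
  if h : n < K then v ⟨n, h⟩ else 0

lemma vext_lt {K : ℕ} {v : Fin K → ℝ} {i : Fin K} : vext K v i.1 = v i := by
  simp [vext, i.isLt]

lemma min_diff (c a b h : ℝ) (hab : a ≤ b) (hh : 0 ≤ h) :
    min (b + h) c - min b c ≤ min (a + h) c - min a c := by
  simp only [min_def]
  split_ifs <;> linarith

lemma clamp_sum (m : ℕ) (u : ℝ) (hu : 0 ≤ u) :
    ∑ i ∈ range (m + 1), min 1 (max 0 (u - (i : ℝ))) = min u ((m : ℝ) + 1) := by
  induction m with
  | zero =>
      rw [Finset.sum_range_one]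
      norm_num
      rw [max_eq_right hu, min_comm]
  | succ m ih =>
      rw [Finset.sum_range_succ, ih]
      push_cast
      rcases le_total u ((m : ℝ) + 1) with h1 | h1
      · have e1 : max 0 (u - ((m : ℝ) + 1)) = 0 := max_eq_left (by linarith)
        have e3 : min u ((m : ℝ) + 1) = u := min_eq_left h1
        have e4 : min u ((m : ℝ) + 1 + 1) = u := min_eq_left (by linarith)
        rw [e1, e3, e4]
        norm_num
      · have e1 : max 0 (u - ((m : ℝ) + 1)) = u - ((m : ℝ) + 1) :=
          max_eq_right (by linarith)
        have e2 : min u ((m : ℝ) + 1) = (m : ℝ) + 1 := min_eq_right h1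
        rcases le_total u ((m : ℝ) + 1 + 1) with h2 | h2
        · have e5 : min (1 : ℝ) (u - ((m : ℝ) + 1)) = u - ((m : ℝ) + 1) :=
            min_eq_right (by linarith)
          have e6 : min u ((m : ℝ) + 1 + 1) = u := min_eq_left h2
          rw [e1, e2, e5, e6]
          ring
        · have e5 : min (1 : ℝ) (u - ((m : ℝ) + 1)) = 1 := min_eq_left (by linarith)
          have e6 : min u ((m : ℝ) + 1 + 1) = (m : ℝ) + 1 + 1 := min_eq_right h2
          rw [e1, e2, e5, e6]

lemma wstar_rep (K : ℕ) (v : Fin K → ℝ) (t : ℝ) (ht : 0 ≤ t) :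
    wstar K v t = ∑ m ∈ range K,
      (vext K v m - vext K v (m + 1)) * min (t * (K : ℝ)) ((m : ℝ) + 1) := by
  have hu : 0 ≤ t * (K : ℝ) := mul_nonneg ht (Nat.cast_nonneg K)
  have h1 : wstar K v t
      = ∑ i ∈ range K, vext K v i * min 1 (max 0 (t * (K : ℝ) - (i : ℝ))) := by
    rw [wstar, ← Fin.sum_univ_eq_sum_range
      (fun i : ℕ => vext K v i * min 1 (max 0 (t * (K : ℝ) - (i : ℝ)))) K]
    exact Finset.sum_congr rfl fun i _ => by rw [vext_lt]
  have hvK : vext K v K = 0 := dif_neg (lt_irrefl K)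
  have h2 : ∀ i ∈ range K, vext K v i * min 1 (max 0 (t * (K : ℝ) - (i : ℝ)))
      = ∑ m ∈ Ico i K,
        (vext K v m - vext K v (m + 1)) * min 1 (max 0 (t * (K : ℝ) - (i : ℝ))) := by
    intro i hi
    rw [← Finset.sum_mul]
    congr 1
    rw [Finset.sum_Ico_eq_sub _ (le_of_lt (mem_range.1 hi)),
      Finset.sum_range_sub' (vext K v), Finset.sum_range_sub' (vext K v), hvK]
    ring
  rw [h1, Finset.sum_congr rfl h2, Finset.range_eq_Ico, Finset.sum_Ico_Ico_comm,
    Nat.Ico_zero_eq_range]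
  refine Finset.sum_congr rfl fun m _ => ?_
  rw [← Finset.mul_sum, ← Finset.range_eq_Ico, clamp_sum m _ hu]

lemma wstar_zero (K : ℕ) (v : Fin K → ℝ) : wstar K v 0 = 0 := by
  rw [wstar]
  refine Finset.sum_eq_zero fun i _ => ?_
  rw [zero_mul, zero_sub, max_eq_left (neg_nonpos.2 (Nat.cast_nonneg _)),
    min_eq_right (by norm_num)]
  ring

lemma wstar_diff (K : ℕ) (v : Fin K → ℝ) (hv0 : ∀ j, 0 ≤ v j)
    (hvmono : ∀ i j : Fin K, i ≤ j → v j ≤ v i)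
    {x y h : ℝ} (hx : 0 ≤ x) (hxy : x ≤ y) (hh : 0 ≤ h) :
    wstar K v (y + h) - wstar K v y ≤ wstar K v (x + h) - wstar K v x := by
  have hy : 0 ≤ y := le_trans hx hxy
  rw [wstar_rep K v (y + h) (by linarith), wstar_rep K v y hy,
    wstar_rep K v (x + h) (by linarith), wstar_rep K v x hx,
    ← Finset.sum_sub_distrib, ← Finset.sum_sub_distrib]
  refine Finset.sum_le_sum fun m hm => ?_
  have hd : 0 ≤ vext K v m - vext K v (m + 1) := by
    have hmK : m < K := mem_range.1 hm
    unfold vext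
    rcases lt_or_ge (m + 1) K with h1 | h1
    · rw [dif_pos hmK, dif_pos h1]
      have := hvmono ⟨m, hmK⟩ ⟨m + 1, h1⟩ (by simp [Fin.le_def])
      linarith
    · rw [dif_pos hmK, dif_neg (not_lt.2 h1)]
      simpa using hv0 ⟨m, hmK⟩
  rw [← mul_sub, ← mul_sub]
  refine mul_le_mul_of_nonneg_left ?_ hd
  have hK : (0 : ℝ) ≤ (K : ℝ) := Nat.cast_nonneg K
  have := min_diff ((m : ℝ) + 1) (x * K) (y * K) (h * K)
    (mul_le_mul_of_nonneg_right hxy hK) (mul_nonneg hh hK)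
  have e1 : (y + h) * (K : ℝ) = y * K + h * K := by ring
  have e2 : (x + h) * (K : ℝ) = x * K + h * K := by ring
  rw [e1, e2]
  exact this

/-- Telescoping: the sum of weights over an initial segment. -/
lemma sum_Iic_wowaWeight (K : ℕ) (v p : Fin K → ℝ) (ρ : Equiv.Perm (Fin K)) (r : Fin K) :
    ∑ j ∈ Iic r, wowaWeight K v p ρ j = wstar K v (∑ i ∈ Iic r, p (ρ i)) := by
  set F : ℕ → ℝ := fun n =>
    wstar K v (∑ i ∈ univ.filter (fun i : Fin K => i.1 < n), p (ρ i)) with hF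
  have hIic : ∀ j : Fin K, Iic j = univ.filter (fun i : Fin K => i.1 < j.1 + 1) := by
    intro j; ext i
    simp only [mem_Iic, mem_filter, mem_univ, true_and, Fin.le_def]
    omega
  have hIio : ∀ j : Fin K, Iio j = univ.filter (fun i : Fin K => i.1 < j.1) := by
    intro j; ext i
    simp only [mem_Iio, mem_filter, mem_univ, true_and, Fin.lt_def]
  have hw : ∀ j : Fin K, wowaWeight K v p ρ j = F (j.1 + 1) - F j.1 := by
    intro j; rw [wowaWeight, hIic j, hIio j]
  have hmap : ∑ j ∈ Iic r, (F (j.1 + 1) - F j.1)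
      = ∑ n ∈ Finset.Iic r.1, (F (n + 1) - F n) := by
    rw [← Fin.map_valEmbedding_Iic, Finset.sum_map]
    simp only [Fin.valEmbedding_apply]
  have hrange : (Finset.Iic r.1) = range (r.1 + 1) := by
    ext n; simp [Nat.lt_succ_iff]
  have hF0 : F 0 = 0 := by
    have h : (univ.filter (fun i : Fin K => i.1 < 0)) = ∅ := by
      ext i; simp
    rw [hF]; simp only [h, Finset.sum_empty, wstar_zero]
  calc ∑ j ∈ Iic r, wowaWeight K v p ρ j
      = ∑ j ∈ Iic r, (F (j.1 + 1) - F j.1) := Finset.sum_congr rfl fun j _ => hw j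
    _ = ∑ n ∈ Finset.Iic r.1, (F (n + 1) - F n) := hmap
    _ = ∑ n ∈ range (r.1 + 1), (F (n + 1) - F n) := by rw [hrange]
    _ = F (r.1 + 1) - F 0 := Finset.sum_range_sub F (r.1 + 1)
    _ = wstar K v (∑ i ∈ Iic r, p (ρ i)) := by
        have h2 : F (r.1 + 1)
            = wstar K v (∑ i ∈ univ.filter (fun i : Fin K => i.1 < r.1 + 1), p (ρ i)) := by
          simp only [hF]
        rw [hF0, sub_zero, h2, ← hIic r]

/-- Capacity bound: the sum of weights over any subset is at most
`w*` of the corresponding probability mass. -/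
lemma weight_sum_le (K : ℕ) (v p : Fin K → ℝ) (hv0 : ∀ j, 0 ≤ v j)
    (hvmono : ∀ i j : Fin K, i ≤ j → v j ≤ v i) (hp0 : ∀ j, 0 ≤ p j)
    (ρ : Equiv.Perm (Fin K)) (J : Finset (Fin K)) :
    ∑ j ∈ J, wowaWeight K v p ρ j ≤ wstar K v (∑ j ∈ J, p (ρ j)) := by
  induction J using Finset.induction_on_max with
  | empty => simp [wstar_zero]
  | insert a J hJ ih =>
    have haJ : a ∉ J := fun hmem => lt_irrefl a (hJ a hmem)
    rw [Finset.sum_insert haJ, Finset.sum_insert haJ]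
    have hsub : J ⊆ Iio a := fun x hx => mem_Iio.2 (hJ x hx)
    have hQy : ∑ j ∈ J, p (ρ j) ≤ ∑ i ∈ Iio a, p (ρ i) :=
      Finset.sum_le_sum_of_subset_of_nonneg hsub (fun i _ _ => hp0 _)
    have hQ0 : 0 ≤ ∑ j ∈ J, p (ρ j) := Finset.sum_nonneg fun j _ => hp0 _
    have hω : wowaWeight K v p ρ a
        ≤ wstar K v (∑ j ∈ J, p (ρ j) + p (ρ a)) - wstar K v (∑ j ∈ J, p (ρ j)) := by
      rw [wowaWeight]
      have hsplit : ∑ i ∈ Iic a, p (ρ i) = ∑ i ∈ Iio a, p (ρ i) + p (ρ a) := by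
        rw [← Finset.Iio_insert a, Finset.sum_insert (by simp)]
        ring
      rw [hsplit]
      exact wstar_diff K v hv0 hvmono hQ0 hQy (hp0 _)
    have : p (ρ a) + ∑ j ∈ J, p (ρ j) = ∑ j ∈ J, p (ρ j) + p (ρ a) := by ring
    rw [this]
    linarith

/-- Key lemma: for a nonnegative vector `a` sorted nonincreasingly by `τ`,
the `τ`-weighted WOWA value dominates the one of any permutation `σ`. -/
lemma wowa_perm_le (K : ℕ) (v p : Fin K → ℝ) (hv0 : ∀ j, 0 ≤ v j)
    (hvmono : ∀ i j : Fin K, i ≤ j → v j ≤ v i) (hp0 : ∀ j, 0 ≤ p j)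
    (a : Fin K → ℝ) (ha : ∀ j, 0 ≤ a j) (σ τ : Equiv.Perm (Fin K))
    (hτ : ∀ j j' : Fin K, j ≤ j' → a (τ j') ≤ a (τ j)) :
    ∑ j : Fin K, wowaWeight K v p σ j * a (σ j)
      ≤ ∑ j : Fin K, wowaWeight K v p τ j * a (τ j) := by
  classical
  set bN : ℕ → ℝ := fun n => if h : n < K then a (τ ⟨n, h⟩) else 0 with hbN
  have hbmono : ∀ n n' : ℕ, n ≤ n' → bN n' ≤ bN n := by
    intro n n' hnn'
    rw [hbN]
    rcases lt_or_ge n' K with h1 | h1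
    · have h2 : n < K := lt_of_le_of_lt hnn' h1
      simp only [dif_pos h1, dif_pos h2]
      exact hτ ⟨n, h2⟩ ⟨n', h1⟩ (by simpa [Fin.le_def])
    · rcases lt_or_ge n K with h2 | h2
      · simp only [dif_neg (not_lt.2 h1), dif_pos h2]
        exact ha _
      · simp only [dif_neg (not_lt.2 h1), dif_neg (not_lt.2 h2)]
        exact le_rfl
  set c : Fin K → ℝ := fun m => bN m.1 - bN (m.1 + 1) with hc
  have hc0 : ∀ m : Fin K, 0 ≤ c m := fun m =>
    sub_nonneg.2 (hbmono m.1 (m.1 + 1) (Nat.le_succ _))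
  -- layer-cake decomposition
  have C1 : ∀ x : Fin K, a x = ∑ m : Fin K, (if a (τ m) ≤ a x then c m else 0) := by
    intro x
    set M := univ.filter (fun m : Fin K => a (τ m) ≤ a x) with hM
    have hxM : τ.symm x ∈ M := by
      simp [hM, Equiv.apply_symm_apply, le_refl]
    have hMne : M.Nonempty := ⟨τ.symm x, hxM⟩
    set m0 := M.min' hMne with hm0def
    have hm0M : m0 ∈ M := M.min'_mem hMne
    have hm0le : a (τ m0) ≤ a x := (mem_filter.1 hm0M).2
    have hm0x : m0 ≤ τ.symm x := M.min'_le _ hxM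
    have haeq : a (τ m0) = a x := by
      have h1 : a (τ (τ.symm x)) ≤ a (τ m0) := hτ m0 (τ.symm x) hm0x
      rw [Equiv.apply_symm_apply] at h1
      linarith
    have hiff : ∀ m : Fin K, (a (τ m) ≤ a x ↔ m0 ≤ m) := by
      intro m
      constructor
      · intro hmem
        exact M.min'_le m (by simp [hM, hmem])
      · intro hle
        have : a (τ m) ≤ a (τ m0) := hτ m0 m hle
        linarith
    have step1 : ∑ m : Fin K, (if a (τ m) ≤ a x then c m else 0)
        = ∑ n ∈ range K, (if m0.1 ≤ n then bN n - bN (n + 1) else 0) := by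
      rw [← Fin.sum_univ_eq_sum_range (fun n => if m0.1 ≤ n then bN n - bN (n + 1) else 0) K]
      refine Finset.sum_congr rfl fun m _ => ?_
      refine if_congr ?_ ?_ rfl
      · rw [hiff m, Fin.le_def]
      · rw [hc]
    have step2 : ∑ n ∈ range K, (if m0.1 ≤ n then bN n - bN (n + 1) else 0)
        = ∑ n ∈ Ico m0.1 K, (bN n - bN (n + 1)) := by
      rw [← Finset.sum_filter]
      congr 1
      ext n; simp only [mem_filter, mem_range, mem_Ico]; omega
    have hbK : bN K = 0 := dif_neg (lt_irrefl K)
    have step3 : ∑ n ∈ Ico m0.1 K, (bN n - bN (n + 1)) = bN m0.1 := by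
      rw [Finset.sum_Ico_eq_sub _ (le_of_lt m0.isLt),
        Finset.sum_range_sub' bN, Finset.sum_range_sub' bN, hbK]
      ring
    have hbm0 : bN m0.1 = a (τ m0) := by
      rw [hbN]; simp [m0.isLt]
    rw [step1, step2, step3, hbm0, haeq]
  -- weighted layer sums
  set T : Fin K → Finset (Fin K) :=
    fun m => univ.filter (fun x : Fin K => a (τ m) ≤ a x) with hT
  set Λ : Equiv.Perm (Fin K) → Fin K → ℝ :=
    fun ρ m => ∑ j ∈ univ.filter (fun j : Fin K => a (τ m) ≤ a (ρ j)),
      wowaWeight K v p ρ j with hΛ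
  have E1 : ∀ ρ : Equiv.Perm (Fin K),
      ∑ j : Fin K, wowaWeight K v p ρ j * a (ρ j) = ∑ m : Fin K, c m * Λ ρ m := by
    intro ρ
    calc ∑ j : Fin K, wowaWeight K v p ρ j * a (ρ j)
        = ∑ j : Fin K, ∑ m : Fin K,
            (if a (τ m) ≤ a (ρ j) then wowaWeight K v p ρ j * c m else 0) := by
          refine Finset.sum_congr rfl fun j _ => ?_
          conv_lhs => rw [C1 (ρ j), Finset.mul_sum]
          exact Finset.sum_congr rfl fun m _ => by rw [mul_ite, mul_zero]
      _ = ∑ m : Fin K, ∑ j : Fin K,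
            (if a (τ m) ≤ a (ρ j) then wowaWeight K v p ρ j * c m else 0) :=
          Finset.sum_comm
      _ = ∑ m : Fin K, c m * Λ ρ m := by
          refine Finset.sum_congr rfl fun m _ => ?_
          rw [hΛ, ← Finset.sum_filter, Finset.mul_sum]
          exact Finset.sum_congr rfl fun j _ => by ring
  -- the layer mass identity
  have hTmass : ∀ (ρ : Equiv.Perm (Fin K)) (m : Fin K),
      ∑ j ∈ univ.filter (fun j : Fin K => a (τ m) ≤ a (ρ j)), p (ρ j)
        = ∑ x ∈ T m, p x := by
    intro ρ m
    refine Finset.sum_equiv ρ (fun j => ?_) (fun j _ => rfl)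
    simp [hT]
  -- E2 : capacity bound
  have E2 : ∀ (ρ : Equiv.Perm (Fin K)) (m : Fin K),
      Λ ρ m ≤ wstar K v (∑ x ∈ T m, p x) := by
    intro ρ m
    simp only [hΛ]
    rw [← hTmass ρ m]
    exact weight_sum_le K v p hv0 hvmono hp0 ρ _
  -- E3 : equality for the sorting permutation
  have E3 : ∀ m : Fin K, Λ τ m = wstar K v (∑ x ∈ T m, p x) := by
    intro m
    set Mf := univ.filter (fun j : Fin K => a (τ m) ≤ a (τ j)) with hMf
    have hmMf : m ∈ Mf := by simp [hMf]
    have hMfne : Mf.Nonempty := ⟨m, hmMf⟩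
    set r := Mf.max' hMfne with hrdef
    have hrMf : r ∈ Mf := Mf.max'_mem hMfne
    have hrle : a (τ m) ≤ a (τ r) := (mem_filter.1 hrMf).2
    have hMfIic : Mf = Iic r := by
      ext j
      simp only [hMf, mem_filter, mem_univ, true_and, mem_Iic]
      constructor
      · intro hj
        exact Mf.le_max' j (by simp [hMf, hj])
      · intro hj
        exact le_trans hrle (hτ j r hj)
    simp only [hΛ]
    rw [← hMf, hMfIic, sum_Iic_wowaWeight, ← hTmass τ m, ← hMf, hMfIic]
  calc ∑ j : Fin K, wowaWeight K v p σ j * a (σ j)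
      = ∑ m : Fin K, c m * Λ σ m := E1 σ
    _ ≤ ∑ m : Fin K, c m * Λ τ m := by
        refine Finset.sum_le_sum fun m _ => ?_
        refine mul_le_mul_of_nonneg_left ?_ (hc0 m)
        rw [E3 m]
        exact E2 σ m
    _ = ∑ j : Fin K, wowaWeight K v p τ j * a (τ j) := (E1 τ).symm

/-- WOWA of a sum of nonnegative vectors is at most the sum of
their WOWA values (superadditivity across elements). -/
theorem wowa_sum_le (K : ℕ) (v p : Fin K → ℝ)
    (hv0 : ∀ j, 0 ≤ v j) (hvs : ∑ j, v j = 1)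
    (hvmono : ∀ i j : Fin K, i ≤ j → v j ≤ v i)
    (hp0 : ∀ j, 0 < p j) (hps : ∑ j, p j = 1)
    {ι : Type*} (s : Finset ι) (a : ι → Fin K → ℝ)
    (ha : ∀ i ∈ s, ∀ j, 0 ≤ a i j)
    (σ : Equiv.Perm (Fin K))
    (hσ : ∀ j j' : Fin K, j ≤ j' → (∑ i ∈ s, a i (σ j')) ≤ ∑ i ∈ s, a i (σ j))
    (σi : ι → Equiv.Perm (Fin K))
    (hσi : ∀ i ∈ s, ∀ j j' : Fin K, j ≤ j' → a i (σi i j') ≤ a i (σi i j)) :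
    wowaW K v p σ (fun j => ∑ i ∈ s, a i j) ≤
      ∑ i ∈ s, wowaW K v p (σi i) (a i) := by
  have hsplit : wowaW K v p σ (fun j => ∑ i ∈ s, a i j)
      = ∑ i ∈ s, ∑ j : Fin K, wowaWeight K v p σ j * a i (σ j) := by
    rw [wowaW]
    simp_rw [Finset.mul_sum]
    rw [Finset.sum_comm]
  rw [hsplit]
  refine Finset.sum_le_sum fun i hi => ?_
  exact wowa_perm_le K v p hv0 hvmono (fun j => (hp0 j).le) (a i) (ha i hi)
    σ (σi i) (hσi i hi)
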